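/- Existence in extension of scalars for Courant algebroids: let (E, ⟨·,·⟩, ρ, [·,·], D) be a Courant algebroid over O, let i : O → O' be a k-algebra homomorphism, and form E' := O' ⊗_O E with the base-changed pairing ⟨·,·⟩', assumed separating. Let ρ̂ : E → Der_k(O') be a k-linear map satisfying (i) ρ̂(f•u) = i(f)•ρ̂(u), (ii) ρ̂([u,v]) = ρ̂(u)∘ρ̂(v) − ρ̂(v)∘ρ̂(u), and (iii) ρ̂(u)(i(f)) = i(ρ(u) f), for all u, v ∈ E and f ∈ O. Let ρ' : E' → Der_k(O') be the O'-linear extension determined by ρ'(a⊗u) = a•ρ̂(u), and let D' : O' → E' be a k-linear map with ⟨x, D' c⟩' = ρ'(x) c for all x ∈ E', c ∈ O', such that ρ'(D' c) = 0 for all c ∈ O'. Then there exists a k-bilinear bracket [·,·]' on E' satisfying [a⊗u, b⊗v]' = (ab)⊗[u,v] + (a·ρ̂(u)(b))•(1⊗v) − (b·ρ̂(v)(a))•(1⊗u) + (b·i(⟨u,v⟩))•(D' a) for all a, b ∈ O' and u, v ∈ E, and with this bracket (E', ⟨·,·⟩', ρ', [·,·]', D') is a Courant algebroid over O'; in particular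 [1⊗u, 1⊗v]' = 1⊗[u,v], so the structure restricts to the original Courant algebroid on E. (Existence assertion of the paper's Theorem on extension of scalars for Courant algebroids.) -/

import Mathlib

open scoped TensorProduct in
set_option maxHeartbeats 1000000 in
theorem courant_extension_of_scalars_existence
    {k : Type*} [CommRing k] {O : Type*} [CommRing O] [Algebra k O]
    {E : Type*} [AddCommGroup E] [Module k E] [Module O E] [IsScalarTower k O E]
    (P : E →ₗ[O] E →ₗ[O] O) (ρ : E →ₗ[O] Derivation k O O)
    (br : E →ₗ[k] E →ₗ[k] E) (D : O →ₗ[k] E)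
    (hsymm : ∀ u v : E, P u v = P v u)
    (hPD : ∀ (u : E) (f : O), P u (D f) = ρ u f)
    (hLeib : ∀ (u v : E) (f : O), br u (f • v) = f • br u v + ρ u f • v)
    (hAnti : ∀ u v : E, br u v + br v u = D (P u v))
    (hCompat : ∀ u v w : E, ρ u (P v w) = P (br u v) w + P v (br u w))
    (hJac : ∀ u v w : E, br u (br v w) = br (br u v) w + br v (br u w))
    {O' : Type*} [CommRing O'] [Algebra k O'] [Algebra O O'] [IsScalarTower k O O']
    (P' : (O' ⊗[O] E) →ₗ[O'] (O' ⊗[O] E) →ₗ[O'] O')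
    (hP' : ∀ (a b : O') (u v : E),
      P' (a ⊗ₜ[O] u) (b ⊗ₜ[O] v) = a * b * algebraMap O O' (P u v))
    (hsymm' : ∀ x y : O' ⊗[O] E, P' x y = P' y x)
    (hsep' : ∀ x : O' ⊗[O] E, (∀ y : O' ⊗[O] E, P' x y = 0) → x = 0)
    (ρhat : E →ₗ[k] Derivation k O' O')
    (hρhat₁ : ∀ (f : O) (u : E), ρhat (f • u) = algebraMap O O' f • ρhat u)
    (hρhat₂ : ∀ (u v : E) (g : O'),
      ρhat (br u v) g = ρhat u (ρhat v g) - ρhat v (ρhat u g))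
    (hρhat₃ : ∀ (u : E) (f : O), ρhat u (algebraMap O O' f) = algebraMap O O' (ρ u f))
    (ρ' : (O' ⊗[O] E) →ₗ[O'] Derivation k O' O')
    (hρ' : ∀ (a : O') (u : E), ρ' (a ⊗ₜ[O] u) = a • ρhat u)
    (D' : O' →ₗ[k] O' ⊗[O] E)
    (hD'pair : ∀ (x : O' ⊗[O] E) (c : O'), P' x (D' c) = ρ' x c)
    (hD'coiso : ∀ c : O', ρ' (D' c) = 0) :
    ∃ br' : (O' ⊗[O] E) →ₗ[k] (O' ⊗[O] E) →ₗ[k] (O' ⊗[O] E),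
      (∀ (a b : O') (u v : E),
        br' (a ⊗ₜ[O] u) (b ⊗ₜ[O] v) =
          (a * b) ⊗ₜ[O] br u v + (a * ρhat u b) • ((1 : O') ⊗ₜ[O] v)
            - (b * ρhat v a) • ((1 : O') ⊗ₜ[O] u)
            + (b * algebraMap O O' (P u v)) • D' a) ∧
      (∀ (x y : O' ⊗[O] E) (c : O'), br' x (c • y) = c • br' x y + ρ' x c • y) ∧
      (∀ x y : O' ⊗[O] E, br' x y + br' y x = D' (P' x y)) ∧
      (∀ x y z : O' ⊗[O] E, ρ' x (P' y z) = P' (br' x y) z + P' y (br' x z)) ∧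
      (∀ x y z : O' ⊗[O] E, br' x (br' y z) = br' (br' x y) z + br' y (br' x z)) ∧
      (∀ u v : E, br' ((1 : O') ⊗ₜ[O] u) ((1 : O') ⊗ₜ[O] v) = (1 : O') ⊗ₜ[O] br u v) := by
  classical
  -- separation
  have sep : ∀ x : O' ⊗[O] E, (∀ (c : O') (w : E), P' x (c ⊗ₜ[O] w) = 0) → x = 0 := by
    intro x hx
    refine hsep' x fun y => ?_
    induction y using TensorProduct.induction_on with
    | zero => simp
    | tmul c w => exact hx c w
    | add y z hy hz => rw [map_add, hy, hz, add_zero]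
  have sepEq : ∀ x y : O' ⊗[O] E,
      (∀ (c : O') (w : E), P' x (c ⊗ₜ[O] w) = P' y (c ⊗ₜ[O] w)) → x = y := by
    intro x y h
    have h0 := sep (x - y) (by intro c w; rw [map_sub, LinearMap.sub_apply, h, sub_self])
    exact sub_eq_zero.mp h0
  have ρ'tmul : ∀ (a : O') (u : E) (c : O'), ρ' (a ⊗ₜ[O] u) c = a * ρhat u c := by
    intro a u c; rw [hρ', Derivation.smul_apply, smul_eq_mul]
  have pairD : ∀ (c : O') (y : O' ⊗[O] E), P' (D' c) y = ρ' y c := by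
    intro c y; rw [hsymm', hD'pair]
  -- D' lemmas
  have D'alg : ∀ f : O, D' (algebraMap O O' f) = (1 : O') ⊗ₜ[O] D f := by
    intro f
    refine sepEq _ _ fun c w => ?_
    rw [pairD, ρ'tmul, hρhat₃, hsymm' ((1 : O') ⊗ₜ[O] D f) (c ⊗ₜ[O] w), hP', hPD]
    ring
  have D'mul : ∀ c d : O', D' (c * d) = c • D' d + d • D' c := by
    intro c d
    refine sepEq _ _ fun e w => ?_
    rw [pairD, ρ'tmul, Derivation.leibniz, smul_eq_mul, smul_eq_mul, map_add,
      LinearMap.add_apply, map_smul, map_smul, LinearMap.smul_apply, LinearMap.smul_apply,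
      pairD, pairD, ρ'tmul, ρ'tmul, smul_eq_mul, smul_eq_mul]
    ring
  have D'one : D' (1 : O') = 0 := by
    have h := D'mul 1 1
    simp only [mul_one, one_smul] at h
    exact right_eq_add.mp h
  have t2s : ∀ (c : O') (m : E), c • ((1:O') ⊗ₜ[O] m) = c ⊗ₜ[O] m := by
    intro c m; rw [TensorProduct.smul_tmul', smul_eq_mul, mul_one]
  have s1 : ∀ (f : O) (m : E),
      ((1:O') ⊗ₜ[O] (f • m) : O' ⊗[O] E) = algebraMap O O' f • ((1:O') ⊗ₜ[O] m) := by
    intro f m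
    rw [TensorProduct.tmul_smul]
    exact (algebraMap_smul O' f _).symm
  have oneTmulD : ∀ f g : O, ((1:O') ⊗ₜ[O] D (f * g) : O' ⊗[O] E)
      = algebraMap O O' f • ((1:O') ⊗ₜ[O] D g) + algebraMap O O' g • ((1:O') ⊗ₜ[O] D f) := by
    intro f g
    rw [← D'alg, ← D'alg, ← D'alg, map_mul, D'mul]
  have D'smulalg : ∀ (f : O) (a : O'), D' (algebraMap O O' f * a)
      = algebraMap O O' f • D' a + a • ((1:O') ⊗ₜ[O] D f) := by
    intro f a
    rw [D'mul, D'alg]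
  -- first-slot Leibniz for br
  have brfl : ∀ (f : O) (u v : E),
      br (f • u) v = f • br u v - f • D (P u v) + D (f • P u v) - ρ v f • u := by
    intro f u v
    have h1 : br (f • u) v = D (P (f • u) v) - br v (f • u) := eq_sub_of_add_eq (hAnti (f • u) v)
    have h2 : br v u = D (P u v) - br u v := by
      have h3 := hAnti v u
      rw [hsymm v u] at h3
      exact eq_sub_of_add_eq h3
    rw [h1, hLeib v u f, h2, map_smul, LinearMap.smul_apply, smul_sub]
    abel
  -- the raw bilinear expression
  let X : O' → E → O' → E → O' ⊗[O] E := fun a u b v =>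
    (a * b) • ((1:O') ⊗ₜ[O] br u v) + (a * ρhat u b) • ((1:O') ⊗ₜ[O] v)
      - (b * ρhat v a) • ((1:O') ⊗ₜ[O] u) + (b * algebraMap O O' (P u v)) • D' a
  have hX : ∀ a u b v, X a u b v =
    (a * b) • ((1:O') ⊗ₜ[O] br u v) + (a * ρhat u b) • ((1:O') ⊗ₜ[O] v)
      - (b * ρhat v a) • ((1:O') ⊗ₜ[O] u) + (b * algebraMap O O' (P u v)) • D' a :=
    fun _ _ _ _ => rfl
  have Xaddv : ∀ a u b v v', X a u b (v + v') = X a u b v + X a u b v' := by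
    intro a u b v v'
    simp only [hX, map_add, Derivation.add_apply, LinearMap.add_apply, mul_add,
      TensorProduct.tmul_add, add_smul, smul_add]
    abel
  have Xaddb : ∀ a u b b' v, X a u (b + b') v = X a u b v + X a u b' v := by
    intro a u b b' v
    simp only [hX, map_add, mul_add, add_mul, add_smul, smul_add]
    abel
  have Xaddu : ∀ a u u' b v, X a (u + u') b v = X a u b v + X a u' b v := by
    intro a u u' b v
    simp only [hX, map_add, Derivation.add_apply, LinearMap.add_apply, mul_add, add_mul,
      TensorProduct.tmul_add, add_smul, smul_add]
    abel
  have Xadda : ∀ a a' u b v, X (a + a') u b v = X a u b v + X a' u b v := by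
    intro a a' u b v
    simp only [hX, map_add, Derivation.add_apply, LinearMap.add_apply, mul_add, add_mul,
      add_smul, smul_add]
    abel
  have Xbal1 : ∀ (f : O) (a : O') (u : E) (b : O') (v : E),
      X a u (f • b) v = X a u b (f • v) := by
    intro f a u b v
    simp only [hX, Algebra.algebraMap_self, RingHom.id_apply, Algebra.smul_def, Derivation.leibniz, hρhat₃, hLeib, hρhat₁,
      Derivation.smul_apply, map_smul, smul_eq_mul, TensorProduct.tmul_add, s1,
      LinearMap.smul_apply, map_mul, smul_add]
    match_scalars <;> (try simp only [Algebra.smul_def, Algebra.algebraMap_self, RingHom.id_apply]) <;> ring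
  have Xbal2 : ∀ (f : O) (a : O') (u : E) (b : O') (v : E),
      X (f • a) u b v = X a (f • u) b v := by
    intro f a u b v
    simp only [hX, Algebra.algebraMap_self, RingHom.id_apply, Algebra.smul_def, Derivation.leibniz, hρhat₃, brfl, hρhat₁,
      Derivation.smul_apply, map_smul, smul_eq_mul, TensorProduct.tmul_add,
      TensorProduct.tmul_sub, s1, LinearMap.smul_apply, map_mul, D'smulalg, oneTmulD,
      smul_add, smul_sub]
    match_scalars <;> (try simp only [Algebra.smul_def, Algebra.algebraMap_self, RingHom.id_apply]) <;> ring
  have Xkr : ∀ (c : k) (a : O') (u : E) (b : O') (v : E),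
      X a u (c • b) v = c • X a u b v := by
    intro c a u b v
    simp only [hX, map_smul, Derivation.map_smul, smul_add, smul_sub]
    match_scalars <;> (try simp only [Algebra.smul_def, Algebra.algebraMap_self, RingHom.id_apply]) <;> ring
  have Xkl : ∀ (c : k) (a : O') (u : E) (b : O') (v : E),
      X (c • a) u b v = c • X a u b v := by
    intro c a u b v
    simp only [hX, map_smul, Derivation.map_smul, smul_add, smul_sub]
    match_scalars <;> (try simp only [Algebra.smul_def, Algebra.algebraMap_self, RingHom.id_apply]) <;> ring
  -- extensionality for add homs on the tensor product
  have extT : ∀ {F G : O' ⊗[O] E →+ O' ⊗[O] E},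
      (∀ (b : O') (v : E), F (b ⊗ₜ[O] v) = G (b ⊗ₜ[O] v)) → F = G := by
    intro F G h
    refine AddMonoidHom.ext fun x => ?_
    induction x using TensorProduct.induction_on with
    | zero => simp
    | tmul b v => exact h b v
    | add y z hy hz => rw [map_add, map_add, hy, hz]
  -- the inner additive map
  let inner : O' → E → (O' ⊗[O] E →+ O' ⊗[O] E) := fun a u =>
    TensorProduct.liftAddHom
      (AddMonoidHom.mk' (fun b => AddMonoidHom.mk' (fun v => X a u b v) (Xaddv a u b))
        (fun b b' => by ext v; exact Xaddb a u b b' v))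
      (fun f b v => Xbal1 f a u b v)
  have inner_tmul : ∀ a u b v, inner a u (b ⊗ₜ[O] v) = X a u b v := fun _ _ _ _ => rfl
  let outer : O' ⊗[O] E →+ (O' ⊗[O] E →+ O' ⊗[O] E) :=
    TensorProduct.liftAddHom
      (AddMonoidHom.mk'
        (fun a => AddMonoidHom.mk' (fun u => inner a u)
          (fun u u' => extT fun b v => by
            simp only [inner_tmul, AddMonoidHom.add_apply]
            exact Xaddu a u u' b v))
        (fun a a' => AddMonoidHom.ext fun u => extT fun b v => by
          simp only [inner_tmul, AddMonoidHom.add_apply]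
          exact Xadda a a' u b v))
      (fun f a u => extT fun b v => Xbal2 f a u b v)
  have outer_tmul : ∀ a u b v, outer (a ⊗ₜ[O] u) (b ⊗ₜ[O] v) = X a u b v := fun _ _ _ _ => rfl
  have outer_kr : ∀ (c : k) (x y : O' ⊗[O] E), outer x (c • y) = c • outer x y := by
    intro c x y
    induction x using TensorProduct.induction_on with
    | zero => simp
    | tmul a u =>
      induction y using TensorProduct.induction_on with
      | zero => simp
      | tmul b v =>
        rw [TensorProduct.smul_tmul', outer_tmul, outer_tmul]
        exact Xkr c a u b v
      | add y z hy hz => rw [smul_add, map_add, map_add, hy, hz, smul_add]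
    | add x x' hx hx' =>
      rw [map_add, AddMonoidHom.add_apply, AddMonoidHom.add_apply, hx, hx', smul_add]
  have outer_kl : ∀ (c : k) (x y : O' ⊗[O] E), outer (c • x) y = c • outer x y := by
    intro c x y
    induction x using TensorProduct.induction_on with
    | zero => simp
    | tmul a u =>
      induction y using TensorProduct.induction_on with
      | zero => simp
      | tmul b v =>
        rw [TensorProduct.smul_tmul', outer_tmul, outer_tmul]
        exact Xkl c a u b v
      | add y z hy hz =>
        rw [map_add, hy, hz, ← smul_add, ← map_add]
    | add x x' hx hx' =>
      rw [smul_add, map_add, map_add, AddMonoidHom.add_apply, AddMonoidHom.add_apply, hx, hx',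
        smul_add]
  let B₀ : (O' ⊗[O] E) →ₗ[k] (O' ⊗[O] E) →ₗ[k] (O' ⊗[O] E) :=
    { toFun := fun x =>
        { toFun := fun y => outer x y
          map_add' := fun y z => map_add (outer x) y z
          map_smul' := fun c y => outer_kr c x y }
      map_add' := fun x x' => LinearMap.ext fun y => by
        simp only [LinearMap.coe_mk, AddHom.coe_mk, LinearMap.add_apply]
        rw [map_add, AddMonoidHom.add_apply]
      map_smul' := fun c x => LinearMap.ext fun y => by
        simp only [LinearMap.coe_mk, AddHom.coe_mk, RingHom.id_apply, LinearMap.smul_apply]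
        exact outer_kl c x y }
  obtain ⟨B, hB⟩ : ∃ B : (O' ⊗[O] E) →ₗ[k] (O' ⊗[O] E) →ₗ[k] (O' ⊗[O] E),
      ∀ (a : O') (u : E) (b : O') (v : E),
      B (a ⊗ₜ[O] u) (b ⊗ₜ[O] v) =
        (a * b) • ((1:O') ⊗ₜ[O] br u v) + (a * ρhat u b) • ((1:O') ⊗ₜ[O] v)
          - (b * ρhat v a) • ((1:O') ⊗ₜ[O] u)
          + (b * algebraMap O O' (P u v)) • D' a := ⟨B₀, fun _ _ _ _ => rfl⟩
  clear_value X inner outer B₀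
  clear inner_tmul outer_tmul outer_kr outer_kl Xaddv Xaddb Xaddu Xadda Xbal1 Xbal2 Xkr Xkl hX extT
  clear X inner outer B₀
  have brswap : ∀ u v : E, br v u = D (P u v) - br u v := by
    intro u v
    have h3 := hAnti v u
    rw [hsymm v u] at h3
    exact eq_sub_of_add_eq h3
  -- Leibniz in the second slot
  have L2 : ∀ (x y : O' ⊗[O] E) (c : O'), B x (c • y) = c • B x y + ρ' x c • y := by
    intro x y c
    induction x using TensorProduct.induction_on with
    | zero => simp only [map_zero, LinearMap.zero_apply, Derivation.zero_apply, smul_zero,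
        zero_smul, add_zero, zero_add, sub_zero, zero_sub, neg_zero]
    | tmul a u =>
      induction y using TensorProduct.induction_on with
      | zero => simp only [map_zero, LinearMap.zero_apply, Derivation.zero_apply, smul_zero,
        zero_smul, add_zero, zero_add, sub_zero, zero_sub, neg_zero]
      | tmul b v =>
        rw [show c • (b ⊗ₜ[O] v) = (c * b) ⊗ₜ[O] v from by
          rw [TensorProduct.smul_tmul', smul_eq_mul]]
        rw [hB, hB, ρ'tmul,
          show (b ⊗ₜ[O] v : O' ⊗[O] E) = b • ((1:O') ⊗ₜ[O] v) from (t2s b v).symm]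
        simp only [Derivation.leibniz, smul_eq_mul, smul_add, smul_sub, smul_smul]
        match_scalars <;> ring
      | add y z hy hz =>
        rw [smul_add, map_add, hy, hz, map_add, smul_add, smul_add]
        abel
    | add x x' hx hx' =>
      simp only [map_add, LinearMap.add_apply, Derivation.add_apply, add_smul, smul_add]
      rw [hx, hx']
      abel
  -- anchor compatibility with the bracket
  have ρB : ∀ (x y : O' ⊗[O] E) (c : O'), ρ' (B x y) c = ρ' x (ρ' y c) - ρ' y (ρ' x c) := by
    intro x y c
    induction x using TensorProduct.induction_on with
    | zero => simp only [map_zero, LinearMap.zero_apply, Derivation.zero_apply, smul_zero,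
        zero_smul, add_zero, zero_add, sub_zero, zero_sub, neg_zero]
    | tmul a u =>
      induction y using TensorProduct.induction_on with
      | zero => simp only [map_zero, LinearMap.zero_apply, Derivation.zero_apply, smul_zero,
        zero_smul, add_zero, zero_add, sub_zero, zero_sub, neg_zero]
      | tmul b v =>
        rw [hB]
        simp only [map_add, map_sub, map_smul, Derivation.add_apply, Derivation.sub_apply,
          Derivation.smul_apply, hD'coiso, ρ'tmul, hρhat₂, Derivation.leibniz,
          Derivation.zero_apply, smul_eq_mul]
        ring
      | add y z hy hz =>
        simp only [map_add, LinearMap.add_apply, Derivation.add_apply]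
        rw [hy, hz]
        ring
    | add x x' hx hx' =>
      simp only [map_add, LinearMap.add_apply, Derivation.add_apply]
      rw [hx, hx']
      ring
  -- pairing compatibility
  have Cmp : ∀ x y z : O' ⊗[O] E, ρ' x (P' y z) = P' (B x y) z + P' y (B x z) := by
    intro x y z
    induction x using TensorProduct.induction_on with
    | zero => simp only [map_zero, LinearMap.zero_apply, Derivation.zero_apply, smul_zero,
        zero_smul, add_zero, zero_add, sub_zero, zero_sub, neg_zero]
    | tmul a u =>
      induction y using TensorProduct.induction_on with
      | zero => simp only [map_zero, LinearMap.zero_apply, Derivation.zero_apply, smul_zero,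
        zero_smul, add_zero, zero_add, sub_zero, zero_sub, neg_zero]
      | tmul b v =>
        induction z using TensorProduct.induction_on with
        | zero => simp only [map_zero, LinearMap.zero_apply, Derivation.zero_apply, smul_zero,
        zero_smul, add_zero, zero_add, sub_zero, zero_sub, neg_zero]
        | tmul e w =>
          rw [hB, hB, hP']
          simp only [map_add, map_sub, map_smul, LinearMap.add_apply, LinearMap.sub_apply,
            LinearMap.smul_apply, smul_eq_mul, hP', ρ'tmul, pairD, hD'pair,
            Derivation.leibniz, hρhat₃, hCompat, map_add, map_mul]
          rw [hsymm v u]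
          ring
        | add z1 z2 h1 h2 =>
          simp only [map_add, LinearMap.add_apply, Derivation.add_apply]
          rw [h1, h2]
          ring
      | add y1 y2 h1 h2 =>
        simp only [map_add, LinearMap.add_apply, Derivation.add_apply]
        rw [h1, h2]
        ring
    | add x x' hx hx' =>
      simp only [map_add, LinearMap.add_apply, Derivation.add_apply]
      rw [hx, hx']
      ring
  -- failed antisymmetry
  have Anti : ∀ x y : O' ⊗[O] E, B x y + B y x = D' (P' x y) := by
    intro x y
    induction x using TensorProduct.induction_on with
    | zero => simp only [map_zero, LinearMap.zero_apply, Derivation.zero_apply, smul_zero,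
        zero_smul, add_zero, zero_add, sub_zero, zero_sub, neg_zero]
    | tmul a u =>
      induction y using TensorProduct.induction_on with
      | zero => simp only [map_zero, LinearMap.zero_apply, Derivation.zero_apply, smul_zero,
        zero_smul, add_zero, zero_add, sub_zero, zero_sub, neg_zero]
      | tmul b v =>
        rw [hB, hB, hP', hsymm v u,
          show ((1:O') ⊗ₜ[O] br v u : O' ⊗[O] E)
              = (1:O') ⊗ₜ[O] D (P u v) - (1:O') ⊗ₜ[O] br u v from by
            rw [brswap u v, TensorProduct.tmul_sub],
          D'mul, D'mul, D'alg]
        match_scalars <;> ring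
      | add y z hy hz =>
        simp only [map_add, LinearMap.add_apply]
        rw [← hy, ← hz]
        abel
    | add x x' hx hx' =>
      simp only [map_add, LinearMap.add_apply]
      rw [← hx, ← hx']
      abel
  -- Leibniz in the first slot
  have L1 : ∀ (c : O') (x y : O' ⊗[O] E),
      B (c • x) y = c • B x y + P' x y • D' c - ρ' y c • x := by
    intro c x y
    have e2 : B (c • x) y = D' (P' (c • x) y) - B y (c • x) :=
      eq_sub_of_add_eq (Anti (c • x) y)
    have e3 : B y x = D' (P' x y) - B x y := by
      have h := Anti y x
      rw [hsymm' y x] at h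
      exact eq_sub_of_add_eq h
    rw [e2, L2 y x c, map_smul, LinearMap.smul_apply, smul_eq_mul, D'mul, e3, smul_sub]
    abel
  -- bracket with D'
  have H2 : ∀ (x : O' ⊗[O] E) (c : O'), B x (D' c) = D' (ρ' x c) := by
    intro x c
    refine sepEq _ _ fun e w => ?_
    have h1 := Cmp x (D' c) (e ⊗ₜ[O] w)
    rw [pairD, pairD, ρB] at h1
    rw [pairD]
    linear_combination -h1
  have H3 : ∀ (c : O') (x : O' ⊗[O] E), B (D' c) x = 0 := by
    intro c x
    have h := Anti (D' c) x
    rw [H2, pairD] at h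
    exact add_eq_right.mp h
  -- Jacobiator
  obtain ⟨Jf, hJf⟩ : ∃ Jf : (O' ⊗[O] E) → (O' ⊗[O] E) → (O' ⊗[O] E) → O' ⊗[O] E,
      ∀ x y z, Jf x y z = B x (B y z) - B (B x y) z - B y (B x z) :=
    ⟨fun x y z => B x (B y z) - B (B x y) z - B y (B x z), fun _ _ _ => rfl⟩
  have Bunit : ∀ u v : E, B ((1:O') ⊗ₜ[O] u) ((1:O') ⊗ₜ[O] v) = (1:O') ⊗ₜ[O] br u v := by
    intro u v
    rw [hB]
    simp only [Derivation.map_one_eq_zero, mul_zero, zero_smul, one_mul, mul_one, D'one,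
      smul_zero, add_zero, sub_zero, one_smul]
  have junit : ∀ u v w : E,
      Jf ((1:O') ⊗ₜ[O] u) ((1:O') ⊗ₜ[O] v) ((1:O') ⊗ₜ[O] w) = 0 := by
    intro u v w
    simp only [hJf, Bunit]
    rw [hJac u v w, TensorProduct.tmul_add]
    abel
  have jz : ∀ (x y z : O' ⊗[O] E) (c : O'), Jf x y (c • z) = c • Jf x y z := by
    intro x y z c
    rw [hJf, hJf]
    simp only [L2, map_add, ρB, smul_add, smul_sub, add_smul, sub_smul]
    match_scalars <;> ring
  have jy : ∀ (x y z : O' ⊗[O] E) (c : O'), Jf x (c • y) z = c • Jf x y z := by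
    intro x y z c
    rw [hJf, hJf]
    simp only [L1, L2, H2, map_add, map_sub, LinearMap.add_apply, LinearMap.sub_apply,
      ρB, Cmp, smul_add, smul_sub, add_smul, sub_smul, smul_smul]
    match_scalars <;> ring
  have jswap : ∀ x y z : O' ⊗[O] E, Jf x y z = - Jf y x z := by
    intro x y z
    have h0 : B (B x y) z + B (B y x) z = 0 := by
      rw [← LinearMap.add_apply, ← map_add, Anti, H3]
    refine eq_neg_of_add_eq_zero_left ?_
    rw [hJf, hJf]
    calc B x (B y z) - B (B x y) z - B y (B x z) + (B y (B x z) - B (B y x) z - B x (B y z))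
        = -(B (B x y) z + B (B y x) z) := by abel
      _ = 0 := by rw [h0, neg_zero]
  have jx : ∀ (x y z : O' ⊗[O] E) (c : O'), Jf (c • x) y z = c • Jf x y z := by
    intro x y z c
    rw [jswap, jy, ← smul_neg c (Jf y x z), ← jswap]
  have jaddz : ∀ x y z1 z2 : O' ⊗[O] E, Jf x y (z1 + z2) = Jf x y z1 + Jf x y z2 := by
    intro x y z1 z2
    simp only [hJf, map_add]
    abel
  have jaddy : ∀ x y1 y2 z : O' ⊗[O] E, Jf x (y1 + y2) z = Jf x y1 z + Jf x y2 z := by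
    intro x y1 y2 z
    simp only [hJf, map_add, LinearMap.add_apply]
    abel
  have jaddx : ∀ x1 x2 y z : O' ⊗[O] E, Jf (x1 + x2) y z = Jf x1 y z + Jf x2 y z := by
    intro x1 x2 y z
    simp only [hJf, map_add, LinearMap.add_apply]
    abel
  have jac1 : ∀ (u v : E) (z : O' ⊗[O] E),
      Jf ((1:O') ⊗ₜ[O] u) ((1:O') ⊗ₜ[O] v) z = 0 := by
    intro u v z
    induction z using TensorProduct.induction_on with
    | zero => rw [hJf]; simp
    | tmul c w =>
      rw [show (c ⊗ₜ[O] w : O' ⊗[O] E) = c • ((1:O') ⊗ₜ[O] w) from (t2s c w).symm, jz, junit,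
        smul_zero]
    | add z1 z2 h1 h2 => rw [jaddz, h1, h2, add_zero]
  have jac2 : ∀ (u : E) (y z : O' ⊗[O] E), Jf ((1:O') ⊗ₜ[O] u) y z = 0 := by
    intro u y z
    induction y using TensorProduct.induction_on with
    | zero => rw [hJf]; simp
    | tmul b v =>
      rw [show (b ⊗ₜ[O] v : O' ⊗[O] E) = b • ((1:O') ⊗ₜ[O] v) from (t2s b v).symm, jy, jac1,
        smul_zero]
    | add y1 y2 h1 h2 => rw [jaddy, h1, h2, add_zero]
  have jac : ∀ x y z : O' ⊗[O] E, Jf x y z = 0 := by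
    intro x y z
    induction x using TensorProduct.induction_on with
    | zero => rw [hJf]; simp
    | tmul a u =>
      rw [show (a ⊗ₜ[O] u : O' ⊗[O] E) = a • ((1:O') ⊗ₜ[O] u) from (t2s a u).symm, jx, jac2,
        smul_zero]
    | add x1 x2 h1 h2 => rw [jaddx, h1, h2, add_zero]
  refine ⟨B, ?_, L2, Anti, Cmp, ?_, Bunit⟩
  · intro a b u v
    rw [hB, t2s]
  · intro x y z
    have h := jac x y z
    rw [hJf, sub_sub] at h
    exact sub_eq_zero.mp h
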